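/- Let A, B ∈ M_n(ℂ) and define A₂(t) := exp(−itA/2) · ( (1/2)(exp(−itB) A exp(itB) − A) + exp(−itB)(exp(−itA/2) B exp(itA/2) − B) exp(itB) ) · exp(itA/2). There exists a constant C ≥ 0 such that for all t ∈ [0,1], ‖ A₂(t) + (t²/8)( [A,[A,B]] + 2[B,[A,B]] ) ‖ ≤ C t³. -/

import Mathlib

open scoped Matrix.Norms.L2Operator
open Matrix

/-- The exact error Hamiltonian of the second-order (Strang) splitting. -/
noncomputable def A2 {n : ℕ} (A B : Matrix (Fin n) (Fin n) ℂ) (t : ℝ) :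
    Matrix (Fin n) (Fin n) ℂ :=
  NormedSpace.exp ((-(Complex.I * (t : ℂ) / 2)) • A) *
    ((1 / 2 : ℂ) •
        (NormedSpace.exp ((-(Complex.I * (t : ℂ))) • B) * A *
            NormedSpace.exp ((Complex.I * (t : ℂ)) • B) - A) +
      NormedSpace.exp ((-(Complex.I * (t : ℂ))) • B) *
        (NormedSpace.exp ((-(Complex.I * (t : ℂ) / 2)) • A) * B *
            NormedSpace.exp ((Complex.I * (t : ℂ) / 2) • A) - B) *
        NormedSpace.exp ((Complex.I * (t : ℂ)) • B)) *
    NormedSpace.exp ((Complex.I * (t : ℂ) / 2) • A)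

namespace Stmt9Helper

variable {n : ℕ}


/-- `f` is `O(t^k)` on `[0,1]`. -/
def OkP (k : ℕ) (f : ℝ → (Matrix (Fin n) (Fin n) ℂ)) : Prop :=
  ∃ C : ℝ, 0 ≤ C ∧ ∀ t ∈ Set.Icc (0:ℝ) 1, ‖f t‖ ≤ C * t ^ k

theorem OkP.congr {k : ℕ} {f g : ℝ → (Matrix (Fin n) (Fin n) ℂ)} (h : OkP k f) (he : ∀ t, f t = g t) :
    OkP k g := by
  obtain ⟨C, hC0, hC⟩ := h
  exact ⟨C, hC0, fun t ht => (he t) ▸ hC t ht⟩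

theorem OkP.add {k : ℕ} {f g : ℝ → (Matrix (Fin n) (Fin n) ℂ)} (hf : OkP k f) (hg : OkP k g) :
    OkP k (fun t => f t + g t) := by
  obtain ⟨C, hC0, hC⟩ := hf
  obtain ⟨D, hD0, hD⟩ := hg
  refine ⟨C + D, by positivity, fun t ht => ?_⟩
  calc ‖f t + g t‖ ≤ ‖f t‖ + ‖g t‖ := norm_add_le _ _
    _ ≤ C * t ^ k + D * t ^ k := add_le_add (hC t ht) (hD t ht)
    _ = (C + D) * t ^ k := by ring

theorem OkP.mul {j k m : ℕ} (hm : j + k = m) {f g : ℝ → (Matrix (Fin n) (Fin n) ℂ)}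
    (hf : OkP j f) (hg : OkP k g) : OkP m (fun t => f t * g t) := by
  obtain ⟨C, hC0, hC⟩ := hf
  obtain ⟨D, hD0, hD⟩ := hg
  refine ⟨C * D, by positivity, fun t ht => ?_⟩
  have ht0 : (0:ℝ) ≤ t := ht.1
  calc ‖f t * g t‖ ≤ ‖f t‖ * ‖g t‖ := norm_mul_le _ _
    _ ≤ (C * t ^ j) * (D * t ^ k) := by
        exact mul_le_mul (hC t ht) (hD t ht) (norm_nonneg _) (by positivity)
    _ = C * D * t ^ m := by rw [← hm]; ring

theorem OkP.mono {j k : ℕ} (hkj : k ≤ j) {f : ℝ → (Matrix (Fin n) (Fin n) ℂ)} (hf : OkP j f) : OkP k f := by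
  obtain ⟨C, hC0, hC⟩ := hf
  refine ⟨C, hC0, fun t ht => ?_⟩
  calc ‖f t‖ ≤ C * t ^ j := hC t ht
    _ ≤ C * t ^ k := by
        exact mul_le_mul_of_nonneg_left (pow_le_pow_of_le_one ht.1 ht.2 hkj) hC0

theorem OkP.of_continuous {f : ℝ → (Matrix (Fin n) (Fin n) ℂ)} (hf : Continuous f) : OkP 0 f := by
  obtain ⟨C, hC⟩ := (isCompact_Icc (a := (0:ℝ)) (b := 1)).exists_bound_of_continuousOn
    (fun t _ => hf.continuousAt.continuousWithinAt)
  refine ⟨max C 0, le_max_right _ _, fun t ht => ?_⟩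
  have h := (hC t ht).trans (le_max_left C 0)
  simpa using h

theorem OkP.smulc {k : ℕ} (c : ℂ) {f : ℝ → (Matrix (Fin n) (Fin n) ℂ)} (hf : OkP k f) :
    OkP k (fun t => c • f t) := by
  obtain ⟨C, hC0, hC⟩ := hf
  refine ⟨‖c‖ * C, by positivity, fun t ht => ?_⟩
  rw [norm_smul, mul_assoc]
  exact mul_le_mul_of_nonneg_left (hC t ht) (norm_nonneg c)

theorem okp_monomial {k m : ℕ} (hkm : k ≤ m) (c : ℂ) (M : (Matrix (Fin n) (Fin n) ℂ)) :
    OkP k (fun t => (c * (t:ℂ) ^ m) • M) := by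
  refine ⟨‖c‖ * ‖M‖, by positivity, fun t ht => ?_⟩
  have ht0 : (0:ℝ) ≤ t := ht.1
  have h1 : ‖(c * (t:ℂ) ^ m) • M‖ = ‖c‖ * t ^ m * ‖M‖ := by
    rw [norm_smul, norm_mul, norm_pow, Complex.norm_real, Real.norm_of_nonneg ht0]
  rw [h1]
  calc ‖c‖ * t ^ m * ‖M‖ ≤ ‖c‖ * t ^ k * ‖M‖ := by
        have := pow_le_pow_of_le_one ht0 ht.2 hkm
        exact mul_le_mul_of_nonneg_right (mul_le_mul_of_nonneg_left this (norm_nonneg c)) (norm_nonneg M)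
    _ = ‖c‖ * ‖M‖ * t ^ k := by ring

theorem okp_const (M : (Matrix (Fin n) (Fin n) ℂ)) : OkP 0 (fun _ => M) :=
  OkP.of_continuous continuous_const

/-- Taylor tail bound for the exponential in the matrix algebra. -/
theorem exp_tail_bound {k : ℕ} (hk : 0 < k) (x : (Matrix (Fin n) (Fin n) ℂ)) :
    ‖NormedSpace.exp x - ∑ i ∈ Finset.range k, ((i.factorial : ℂ))⁻¹ • x ^ i‖
      ≤ ‖x‖ ^ k * Real.exp ‖x‖ := by
  have hs : Summable (fun i : ℕ => ((i.factorial : ℂ))⁻¹ • x ^ i) :=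
    NormedSpace.expSeries_summable' x
  have hsplit : NormedSpace.exp x - ∑ i ∈ Finset.range k, ((i.factorial : ℂ))⁻¹ • x ^ i
      = ∑' i : ℕ, ((↑(i + k).factorial : ℂ))⁻¹ • x ^ (i + k) := by
    simp only [NormedSpace.exp_eq_tsum ℂ]
    rw [← hs.sum_add_tsum_nat_add k]
    abel
  rw [hsplit]
  have hbound : ∀ i : ℕ, ‖((↑(i + k).factorial : ℂ))⁻¹ • x ^ (i + k)‖
      ≤ ‖x‖ ^ k * (‖x‖ ^ i / i.factorial) := by
    intro i
    rw [norm_smul]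
    have h1 : ‖((↑(i + k).factorial : ℂ))⁻¹‖ = ((i + k).factorial : ℝ)⁻¹ := by
      rw [norm_inv]
      norm_num
    rw [h1]
    have h2 : ‖x ^ (i + k)‖ ≤ ‖x‖ ^ (i + k) := norm_pow_le' x (by omega)
    have h3 : ((i + k).factorial : ℝ)⁻¹ ≤ (i.factorial : ℝ)⁻¹ := by
      apply inv_anti₀
      · exact_mod_cast Nat.factorial_pos i
      · exact_mod_cast Nat.factorial_le (Nat.le_add_right i k)
    calc ((i + k).factorial : ℝ)⁻¹ * ‖x ^ (i + k)‖
        ≤ (i.factorial : ℝ)⁻¹ * ‖x‖ ^ (i + k) := by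
          apply mul_le_mul h3 h2 (norm_nonneg _) (by positivity)
      _ = ‖x‖ ^ k * (‖x‖ ^ i / i.factorial) := by rw [pow_add]; ring
  have hg : Summable (fun i : ℕ => ‖x‖ ^ k * (‖x‖ ^ i / i.factorial)) :=
    (Real.summable_pow_div_factorial ‖x‖).mul_left _
  have hsn : Summable (fun i : ℕ => ‖((↑(i + k).factorial : ℂ))⁻¹ • x ^ (i + k)‖) :=
    Summable.of_nonneg_of_le (fun i => norm_nonneg _) hbound hg
  calc ‖∑' i : ℕ, ((↑(i + k).factorial : ℂ))⁻¹ • x ^ (i + k)‖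
      ≤ ∑' i : ℕ, ‖((↑(i + k).factorial : ℂ))⁻¹ • x ^ (i + k)‖ := norm_tsum_le_tsum_norm hsn
    _ ≤ ∑' i : ℕ, ‖x‖ ^ k * (‖x‖ ^ i / i.factorial) := Summable.tsum_le_tsum hbound hsn hg
    _ = ‖x‖ ^ k * ∑' i : ℕ, (‖x‖ ^ i / i.factorial) := tsum_mul_left
    _ = ‖x‖ ^ k * Real.exp ‖x‖ := by
        rw [Real.exp_eq_exp_ℝ, NormedSpace.exp_eq_tsum_div]

noncomputable section

/-- `exp ((c t) • M)` as a function of `t`. -/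
def Ef (c : ℂ) (M : (Matrix (Fin n) (Fin n) ℂ)) : ℝ → (Matrix (Fin n) (Fin n) ℂ) := fun t => NormedSpace.exp ((c * (t:ℝ)) • M)

/-- first order Taylor polynomial. -/
def Qp (c : ℂ) (M : (Matrix (Fin n) (Fin n) ℂ)) : ℝ → (Matrix (Fin n) (Fin n) ℂ) := fun t => 1 + (c * (t:ℝ)) • M

/-- second order term. -/
def Tp (c : ℂ) (M : (Matrix (Fin n) (Fin n) ℂ)) : ℝ → (Matrix (Fin n) (Fin n) ℂ) := fun t => ((2:ℂ))⁻¹ • ((c * (t:ℝ)) • M * ((c * (t:ℝ)) • M))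

/-- second order Taylor polynomial. -/
def Pp (c : ℂ) (M : (Matrix (Fin n) (Fin n) ℂ)) : ℝ → (Matrix (Fin n) (Fin n) ℂ) := fun t => Qp c M t + Tp c M t

theorem Ef_continuous (c : ℂ) (M : (Matrix (Fin n) (Fin n) ℂ)) : Continuous (Ef c M) := by
  apply (letI : NormedAlgebra ℚ (Matrix (Fin n) (Fin n) ℂ) := NormedAlgebra.restrictScalars ℚ ℂ _; NormedSpace.exp_continuous).comp
  exact ((continuous_const.mul Complex.continuous_ofReal).smul continuous_const)

theorem okp_Ef (c : ℂ) (M : (Matrix (Fin n) (Fin n) ℂ)) : OkP 0 (Ef c M) :=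
  OkP.of_continuous (Ef_continuous c M)

theorem norm_arg_le {c : ℂ} (hc : ‖c‖ ≤ 1) (M : (Matrix (Fin n) (Fin n) ℂ)) {t : ℝ} (ht : t ∈ Set.Icc (0:ℝ) 1) :
    ‖(c * (t:ℝ)) • M‖ ≤ t * ‖M‖ := by
  rw [norm_smul, norm_mul, Complex.norm_real, Real.norm_of_nonneg ht.1]
  exact mul_le_mul_of_nonneg_right (by nlinarith [ht.1, norm_nonneg M] : ‖c‖ * t ≤ t) (norm_nonneg M)

theorem okp_exp_tail {c : ℂ} (hc : ‖c‖ ≤ 1) (M : (Matrix (Fin n) (Fin n) ℂ)) {k : ℕ} (hk : 0 < k) :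
    OkP k (fun t => NormedSpace.exp ((c * (t:ℝ)) • M)
      - ∑ i ∈ Finset.range k, ((i.factorial : ℂ))⁻¹ • ((c * (t:ℝ)) • M) ^ i) := by
  refine ⟨‖M‖ ^ k * Real.exp ‖M‖, by positivity, fun t ht => ?_⟩
  have h1 := exp_tail_bound hk ((c * (t:ℝ)) • M)
  have h2 : ‖(c * (t:ℝ)) • M‖ ≤ t * ‖M‖ := norm_arg_le hc M ht
  have h3 : ‖(c * (t:ℝ)) • M‖ ≤ ‖M‖ := h2.trans (by nlinarith [ht.2, norm_nonneg M, ht.1])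
  refine h1.trans ?_
  calc ‖(c * (t:ℝ)) • M‖ ^ k * Real.exp ‖(c * (t:ℝ)) • M‖
      ≤ (t * ‖M‖) ^ k * Real.exp ‖M‖ := by
        apply mul_le_mul (pow_le_pow_left₀ (norm_nonneg _) h2 k) (Real.exp_le_exp.2 h3)
          (Real.exp_nonneg _) (pow_nonneg (mul_nonneg ht.1 (norm_nonneg M)) k)
    _ = ‖M‖ ^ k * Real.exp ‖M‖ * t ^ k := by rw [mul_pow]; ring

theorem okp_E1 {c : ℂ} (hc : ‖c‖ ≤ 1) (M : (Matrix (Fin n) (Fin n) ℂ)) :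
    OkP 1 (fun t => Ef c M t - 1) := by
  refine (okp_exp_tail hc M one_pos).congr fun t => ?_
  simp [Ef, Finset.sum_range_one]

theorem okp_E2 {c : ℂ} (hc : ‖c‖ ≤ 1) (M : (Matrix (Fin n) (Fin n) ℂ)) :
    OkP 2 (fun t => Ef c M t - Qp c M t) := by
  refine (okp_exp_tail hc M two_pos).congr fun t => ?_
  rw [show (2:ℕ) = 1 + 1 from rfl, Finset.sum_range_succ, Finset.sum_range_one]
  simp [Ef, Qp]

theorem okp_E3 {c : ℂ} (hc : ‖c‖ ≤ 1) (M : (Matrix (Fin n) (Fin n) ℂ)) :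
    OkP 3 (fun t => Ef c M t - Pp c M t) := by
  refine (okp_exp_tail hc M three_pos).congr fun t => ?_
  rw [show (3:ℕ) = 1 + 1 + 1 from rfl, Finset.sum_range_succ, Finset.sum_range_succ,
    Finset.sum_range_one]
  simp [Ef, Qp, Tp, Pp, pow_two, Nat.factorial]

theorem okp_Qp (c : ℂ) (M : (Matrix (Fin n) (Fin n) ℂ)) : OkP 0 (Qp c M) :=
  OkP.of_continuous <| by
    exact continuous_const.add ((continuous_const.mul Complex.continuous_ofReal).smul continuous_const)

theorem okp_Pp (c : ℂ) (M : (Matrix (Fin n) (Fin n) ℂ)) : OkP 0 (Pp c M) := by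
  have h2 : Continuous fun t : ℝ => (c * (t:ℝ)) • M :=
    (continuous_const.mul Complex.continuous_ofReal).smul continuous_const
  exact OkP.of_continuous <| by
    exact (continuous_const.add h2).add ((by exact h2.mul h2 : Continuous fun t : ℝ => (c * (t:ℝ)) • M * ((c * (t:ℝ)) • M)).const_smul ((2:ℂ))⁻¹)

theorem okp_Qp_sub_one (c : ℂ) (M : (Matrix (Fin n) (Fin n) ℂ)) : OkP 1 (fun t => Qp c M t - 1) := by
  refine (okp_monomial le_rfl c M).congr fun t => ?_
  simp [Qp]

theorem okp_Tp (c : ℂ) (M : (Matrix (Fin n) (Fin n) ℂ)) : OkP 2 (Tp c M) := by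
  refine (okp_monomial le_rfl (2⁻¹ * c ^ 2) (M * M)).congr fun t => ?_
  simp only [Tp, smul_mul_assoc, mul_smul_comm, smul_smul]
  rw [show (2:ℂ)⁻¹ * (c * (t:ℝ) * (c * (t:ℝ))) = 2⁻¹ * c ^ 2 * (t:ℝ)^2 by ring]


section Main

variable (A B : (Matrix (Fin n) (Fin n) ℂ))

/-- The commutator combination `[A,[A,B]] + 2[B,[A,B]]`. -/
def Kc : (Matrix (Fin n) (Fin n) ℂ) :=
  (A * (A * B - B * A) - (A * B - B * A) * A) +
    2 • (B * (A * B - B * A) - (A * B - B * A) * B)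

/-- Conjugation of `B` by the first-order polynomials. -/
def Lf : ℝ → (Matrix (Fin n) (Fin n) ℂ) := fun t =>
  Qp (-(Complex.I/2)) A t * B * Qp (Complex.I/2) A t - B

/-- Junk terms of degree ≥ 3. -/
def Jf : ℝ → (Matrix (Fin n) (Fin n) ℂ) := fun t =>
  (-(Complex.I^3)/4 * (t:ℂ)^3) • (A*(B*(A*B)))
  + (Complex.I^3/4 * (t:ℂ)^3) • (B*(A*(B*A)))
  + (Complex.I^3/4 * (t:ℂ)^3) • (B*(A*(B*B)))
  + (-(Complex.I^3)/4 * (t:ℂ)^3) • (B*(B*(A*B)))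
  + (Complex.I^4/4 * (t:ℂ)^4) • (B*(A*(B*(A*B))))
  + (Complex.I^4/8 * (t:ℂ)^4) • (B*(B*(A*(B*B))))

/-- Second-order approximation to the middle factor. -/
def Ghat : ℝ → (Matrix (Fin n) (Fin n) ℂ) := fun t =>
  (2:ℂ)⁻¹ • (Pp (-Complex.I) B t * A * Pp Complex.I B t - A)
  + Qp (-Complex.I) B t * Lf A B t * Qp Complex.I B t
  + Tp (-(Complex.I/2)) A t * B + B * Tp (Complex.I/2) A t

/-- The middle factor of `A2`. -/
def Gf : ℝ → (Matrix (Fin n) (Fin n) ℂ) := fun t =>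
  (1/2 : ℂ) • (Ef (-Complex.I) B t * A * Ef Complex.I B t - A)
  + Ef (-Complex.I) B t
      * (Ef (-(Complex.I/2)) A t * B * Ef (Complex.I/2) A t - B)
      * Ef Complex.I B t

theorem hcI : ‖(Complex.I : ℂ)‖ ≤ 1 := by simp
theorem hcI' : ‖(-Complex.I : ℂ)‖ ≤ 1 := by simp
theorem hcI2 : ‖(Complex.I/2 : ℂ)‖ ≤ 1 := by
  rw [norm_div]; simp; norm_num
theorem hcI2' : ‖(-(Complex.I/2) : ℂ)‖ ≤ 1 := by
  rw [norm_neg]; exact hcI2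

theorem okp_L : OkP 1 (Lf A B) := by
  refine OkP.congr (k := 1)
    (((okp_monomial (m := 1) le_rfl (-(Complex.I/2)) (A*B)).add
      (okp_monomial (m := 1) le_rfl (Complex.I/2) (B*A))).add
      (okp_monomial (m := 2) (by norm_num) (-(Complex.I/2)*(Complex.I/2)) (A*(B*A))))
    fun t => ?_
  simp only [Lf, Qp]
  simp only [mul_add, add_mul, sub_mul, mul_sub, smul_mul_assoc, mul_smul_comm,
    smul_smul, smul_add, smul_sub, mul_one, one_mul, mul_assoc]
  module

set_option maxHeartbeats 1600000 in
theorem claim2 : ∀ t : ℝ,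
    Ghat A B t = (Complex.I^2/8 * (t:ℂ)^2) • Kc A B + Jf A B t := by
  intro t
  simp only [Ghat, Pp, Qp, Tp, Lf, Kc, Jf]
  simp only [mul_add, add_mul, sub_mul, mul_sub, smul_mul_assoc, mul_smul_comm,
    smul_smul, smul_add, smul_sub, mul_one, one_mul, mul_assoc]
  module

theorem okp_J : OkP 3 (Jf A B) :=
  (((((okp_monomial (m := 3) le_rfl (-(Complex.I^3)/4) (A*(B*(A*B)))).add
    (okp_monomial (m := 3) le_rfl (Complex.I^3/4) (B*(A*(B*A))))).add
    (okp_monomial (m := 3) le_rfl (Complex.I^3/4) (B*(A*(B*B))))).add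
    (okp_monomial (m := 3) le_rfl (-(Complex.I^3)/4) (B*(B*(A*B))))).add
    (okp_monomial (m := 4) (by norm_num) (Complex.I^4/4) (B*(A*(B*(A*B)))))).add
    (okp_monomial (m := 4) (by norm_num) (Complex.I^4/8) (B*(B*(A*(B*B)))))

theorem okp_Ghat_plus : OkP 3 (fun t => Ghat A B t + (((t : ℂ) ^ 2) / 8) • Kc A B) := by
  refine (okp_J A B).congr fun t => ?_
  rw [claim2 A B t,
    show (Complex.I^2/8 * (t:ℂ)^2) = -(((t:ℂ)^2)/8) from by rw [Complex.I_sq]; ring]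
  module

theorem okp_Ghat : OkP 2 (Ghat A B) :=
  OkP.congr (k := 2)
    ((okp_monomial (m := 2) le_rfl (Complex.I^2/8) (Kc A B)).add
      ((okp_J A B).mono (by norm_num)))
    fun t => (claim2 A B t).symm

set_option maxHeartbeats 1600000 in
theorem okp_G_sub_Ghat : OkP 3 (fun t => Gf A B t - Ghat A B t) := by
  have hb1 : OkP 3 (fun t => (2:ℂ)⁻¹ •
      ((Ef (-Complex.I) B t - Pp (-Complex.I) B t) * A * Ef Complex.I B t
        + Pp (-Complex.I) B t * A * (Ef Complex.I B t - Pp Complex.I B t))) :=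
    ((((okp_E3 hcI' B).mul rfl (okp_const A)).mul rfl (okp_Ef Complex.I B)).add
     (((okp_Pp (-Complex.I) B).mul rfl (okp_const A)).mul rfl
      (okp_E3 hcI B))).smulc (2:ℂ)⁻¹
  have hb2 : OkP 3 (fun t =>
      (Ef (-Complex.I) B t - Qp (-Complex.I) B t) * Lf A B t * Ef Complex.I B t) :=
    ((okp_E2 hcI' B).mul rfl (okp_L A B)).mul rfl (okp_Ef Complex.I B)
  have hb3 : OkP 3 (fun t =>
      Qp (-Complex.I) B t * Lf A B t * (Ef Complex.I B t - Qp Complex.I B t)) :=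
    ((okp_Qp (-Complex.I) B).mul rfl (okp_L A B)).mul rfl (okp_E2 hcI B)
  have hb4 : OkP 3 (fun t => Ef (-Complex.I) B t
      * (Ef (-(Complex.I/2)) A t - Pp (-(Complex.I/2)) A t) * B * Ef (Complex.I/2) A t
      * Ef Complex.I B t) :=
    ((((okp_Ef (-Complex.I) B).mul rfl (okp_E3 hcI2' A)).mul rfl
      (okp_const B)).mul rfl (okp_Ef (Complex.I/2) A)).mul rfl
      (okp_Ef Complex.I B)
  have hb5 : OkP 3 (fun t => (Ef (-Complex.I) B t - 1) * Tp (-(Complex.I/2)) A t * B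
      * Ef (Complex.I/2) A t * Ef Complex.I B t) :=
    ((((okp_E1 hcI' B).mul rfl (okp_Tp (-(Complex.I/2)) A)).mul rfl
      (okp_const B)).mul rfl (okp_Ef (Complex.I/2) A)).mul rfl
      (okp_Ef Complex.I B)
  have hb6 : OkP 3 (fun t => Tp (-(Complex.I/2)) A t * B
      * ((Ef (Complex.I/2) A t - 1) * Ef Complex.I B t + (Ef Complex.I B t - 1))) :=
    ((okp_Tp (-(Complex.I/2)) A).mul rfl (okp_const B)).mul rfl
      (((okp_E1 hcI2 A).mul rfl (okp_Ef Complex.I B)).add (okp_E1 hcI B))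
  have hb7 : OkP 3 (fun t => Ef (-Complex.I) B t * Qp (-(Complex.I/2)) A t * B
      * (Ef (Complex.I/2) A t - Pp (Complex.I/2) A t) * Ef Complex.I B t) :=
    ((((okp_Ef (-Complex.I) B).mul rfl (okp_Qp (-(Complex.I/2)) A)).mul
      rfl (okp_const B)).mul rfl (okp_E3 hcI2 A)).mul rfl
      (okp_Ef Complex.I B)
  have hb8 : OkP 3 (fun t =>
      ((Ef (-Complex.I) B t - 1) * Qp (-(Complex.I/2)) A t + (Qp (-(Complex.I/2)) A t - 1))
      * B * Tp (Complex.I/2) A t * Ef Complex.I B t) :=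
    (((((okp_E1 hcI' B).mul rfl (okp_Qp (-(Complex.I/2)) A)).add
      (okp_Qp_sub_one (-(Complex.I/2)) A)).mul rfl (okp_const B)).mul
      rfl (okp_Tp (Complex.I/2) A)).mul rfl (okp_Ef Complex.I B)
  have hb9 : OkP 3 (fun t => B * Tp (Complex.I/2) A t * (Ef Complex.I B t - 1)) :=
    ((okp_const B).mul rfl (okp_Tp (Complex.I/2) A)).mul rfl (okp_E1 hcI B)
  refine OkP.congr
    ((((((((hb1.add hb2).add hb3).add hb4).add hb5).add hb6).add hb7).add hb8).add hb9)
    fun t => ?_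
  simp only [Gf, Ghat, Pp, Lf]
  simp only [mul_add, add_mul, sub_mul, mul_sub, smul_mul_assoc, mul_smul_comm,
    smul_smul, smul_add, smul_sub, mul_one, one_mul, mul_assoc]
  module

theorem hA2 : ∀ t : ℝ, A2 A B t
    = Ef (-(Complex.I/2)) A t * Gf A B t * Ef (Complex.I/2) A t := by
  intro t
  simp only [A2, Gf, Ef]
  rw [show ∀ s : ℂ, -(Complex.I * s / 2) = -(Complex.I/2) * s from fun s => by ring]
  rw [show ∀ s : ℂ, Complex.I * s / 2 = Complex.I/2 * s from fun s => by ring]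
  rw [show ∀ s : ℂ, -(Complex.I * s) = -Complex.I * s from fun s => by ring]

set_option maxHeartbeats 1600000 in
theorem key : OkP 3 (fun t => A2 A B t + (((t : ℂ) ^ 2) / 8) • Kc A B) := by
  have h1 : OkP 3 (fun t => Ef (-(Complex.I/2)) A t * (Gf A B t - Ghat A B t)
      * Ef (Complex.I/2) A t) :=
    ((okp_Ef (-(Complex.I/2)) A).mul rfl (okp_G_sub_Ghat A B)).mul rfl
      (okp_Ef (Complex.I/2) A)
  have h2 : OkP 3 (fun t => (Ef (-(Complex.I/2)) A t - 1) * Ghat A B t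
      * Ef (Complex.I/2) A t) :=
    ((okp_E1 hcI2' A).mul rfl (okp_Ghat A B)).mul rfl
      (okp_Ef (Complex.I/2) A)
  have h3 : OkP 3 (fun t => Ghat A B t * (Ef (Complex.I/2) A t - 1)) :=
    (okp_Ghat A B).mul rfl (okp_E1 hcI2 A)
  refine OkP.congr (((h1.add h2).add h3).add (okp_Ghat_plus A B)) fun t => ?_
  rw [hA2 A B t]
  simp only [mul_add, add_mul, sub_mul, mul_sub, smul_mul_assoc, mul_smul_comm,
    smul_smul, smul_add, smul_sub, mul_one, one_mul, mul_assoc]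
  module

end Main

end
end Stmt9Helper

/-- the leading term of `A₂(t)` is `-(t²/8)([A,[A,B]] + 2[B,[A,B]])`. -/
theorem stmt9 {n : ℕ} (A B : Matrix (Fin n) (Fin n) ℂ) :
    ∃ C : ℝ, 0 ≤ C ∧ ∀ t ∈ Set.Icc (0:ℝ) 1,
      ‖A2 A B t +
          (((t : ℂ) ^ 2) / 8) •
            ((A * (A * B - B * A) - (A * B - B * A) * A) +
              2 • (B * (A * B - B * A) - (A * B - B * A) * B))‖
        ≤ C * t ^ 3 := by
  obtain ⟨C, hC0, hC⟩ := Stmt9Helper.key A B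
  refine ⟨C, hC0, fun t ht => ?_⟩
  have h := hC t ht
  simp only [Stmt9Helper.Kc] at h
  exact h
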